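/- Let (r_j)_{j∈ℤ} be a sequence of real numbers and suppose there exists C₀ > 0 such that #{j ∈ ℤ : |r_j − μ| ≤ 1} ≤ C₀(1 + |μ|) for all μ ∈ ℝ. Let h : ℝ → ℂ be measurable with |h(t)| ≤ C₁(1 + |t|)^{−4} for all t ∈ ℝ. Then there exists C > 0 such that for all λ ≥ 1, Σ_{j : |r_j| > λ} | ∫_{−λ}^{λ} h(t − r_j) dt | ≤ Cλ. -/

import Mathlib

open Real MeasureTheory

private lemma zpow_neg3_anti {a b : ℝ} (ha : 0 < a) (hab : a ≤ b) :
    b ^ (-3:ℤ) ≤ a ^ (-3:ℤ) := by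
  rw [zpow_neg, zpow_neg, zpow_ofNat, zpow_ofNat]
  exact inv_anti₀ (by positivity) (pow_le_pow_left₀ ha.le hab 3)

private lemma zpow_neg4_le_one {x : ℝ} (hx : 0 ≤ x) : (1 + x) ^ (-4:ℤ) ≤ 1 := by
  rw [zpow_neg, zpow_ofNat]
  rw [show (1:ℝ) = 1⁻¹ by norm_num]
  exact inv_anti₀ (by norm_num) (one_le_pow₀ (by linarith))

private lemma sum_range_inv_sq (n : ℕ) :
    ∑ k ∈ Finset.range n, ((1 + (k:ℝ))^2)⁻¹ ≤ 2 - 2/((n:ℝ)+1) := by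
  induction n with
  | zero => norm_num
  | succ n ih =>
    rw [Finset.sum_range_succ]
    have h1 : (0:ℝ) < (n:ℝ)+1 := by positivity
    have h2 : (0:ℝ) < (n:ℝ)+2 := by positivity
    have key : ((1 + (n:ℝ))^2)⁻¹ ≤ 2/((n:ℝ)+1) - 2/((n:ℝ)+2) := by
      rw [show (1 + (n:ℝ)) = (n:ℝ)+1 by ring]
      rw [div_sub_div _ _ (ne_of_gt h1) (ne_of_gt h2), ← one_div,
        div_le_div_iff₀ (by positivity) (by positivity)]
      nlinarith
    have e : ((n:ℝ)+1+1) = (n:ℝ)+2 := by ring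
    push_cast
    rw [e]
    linarith

private lemma sum_finset_inv_sq (v : Finset ℕ) :
    ∑ k ∈ v, ((1 + (k:ℝ))^2)⁻¹ ≤ 2 := by
  have hsub : v ⊆ Finset.range (v.sup id + 1) := fun k hk =>
    Finset.mem_range.mpr (Nat.lt_succ_of_le (Finset.le_sup (f := id) hk))
  calc ∑ k ∈ v, ((1 + (k:ℝ))^2)⁻¹
      ≤ ∑ k ∈ Finset.range (v.sup id + 1), ((1 + (k:ℝ))^2)⁻¹ :=
        Finset.sum_le_sum_of_subset_of_nonneg hsub (fun k _ _ => by positivity)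
    _ ≤ 2 - 2/(((v.sup id + 1 : ℕ):ℝ)+1) := sum_range_inv_sq _
    _ ≤ 2 := by
        have : (0:ℝ) < ((v.sup id + 1 : ℕ):ℝ)+1 := by positivity
        have : (0:ℝ) ≤ 2/(((v.sup id + 1 : ℕ):ℝ)+1) := by positivity
        linarith

private lemma core_pos (lam r : ℝ) (hlam : 0 < lam) (hr : lam < r) :
    ∫ t in (-lam)..lam, (1 + |t - r|) ^ (-4:ℤ) ≤ (1/3) * (1 + (r - lam)) ^ (-3:ℤ) := by
  have hll : -lam ≤ lam := by linarith
  have huIcc : Set.uIcc (-lam) lam = Set.Icc (-lam) lam := Set.uIcc_of_le hll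
  have h0 : ∀ t ∈ Set.uIcc (-lam) lam, (0:ℝ) < 1 + r - t := by
    intro t ht
    rw [huIcc, Set.mem_Icc] at ht
    linarith [ht.2]
  have heq : Set.EqOn (fun t => (1 + |t - r|) ^ (-4:ℤ))
      (fun t => (1 + r - t) ^ (-4:ℤ)) (Set.uIcc (-lam) lam) := by
    intro t ht
    have ht2 : t ≤ lam := by rw [huIcc, Set.mem_Icc] at ht; exact ht.2
    have : |t - r| = -(t - r) := abs_of_nonpos (by linarith)
    simp only [this]
    norm_num
    ring_nf
  have hderiv : ∀ t ∈ Set.uIcc (-lam) lam,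
      HasDerivAt (fun t => (1/3 : ℝ) * (1 + r - t) ^ (-3:ℤ)) ((1 + r - t) ^ (-4:ℤ)) t := by
    intro t ht
    have hne : (1 + r - t) ≠ 0 := ne_of_gt (h0 t ht)
    have h1 : HasDerivAt (fun t : ℝ => 1 + r - t) (-1) t := by
      simpa using (hasDerivAt_id t).const_sub (1 + r)
    have h2 := ((hasDerivAt_zpow (-3) (1 + r - t) (Or.inl hne)).comp t h1).const_mul (1/3 : ℝ)
    refine h2.congr_deriv ?_
    have : (-3 : ℤ) - 1 = -4 := by norm_num
    rw [this]
    push_cast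
    ring
  have hint : IntervalIntegrable (fun t => (1 + r - t) ^ (-4:ℤ)) volume (-lam) lam := by
    apply ContinuousOn.intervalIntegrable
    exact ContinuousOn.zpow₀ ((continuous_const.sub continuous_id).continuousOn) (-4)
      (fun t ht => Or.inl (ne_of_gt (h0 t ht)))
  rw [intervalIntegral.integral_congr heq,
    intervalIntegral.integral_eq_sub_of_hasDerivAt hderiv hint]
  have hpos : (0:ℝ) < (1 + r - -lam) ^ (-3:ℤ) := by
    have : (0:ℝ) < 1 + r - -lam := by linarith
    positivity
  have e : (1 + r - lam) = 1 + (r - lam) := by ring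
  rw [e] at *
  linarith

private lemma core_neg (lam r : ℝ) (hlam : 0 < lam) (hr : r < -lam) :
    ∫ t in (-lam)..lam, (1 + |t - r|) ^ (-4:ℤ) ≤ (1/3) * (1 + (-r - lam)) ^ (-3:ℤ) := by
  have hll : -lam ≤ lam := by linarith
  have huIcc : Set.uIcc (-lam) lam = Set.Icc (-lam) lam := Set.uIcc_of_le hll
  have h0 : ∀ t ∈ Set.uIcc (-lam) lam, (0:ℝ) < 1 + t - r := by
    intro t ht
    rw [huIcc, Set.mem_Icc] at ht
    linarith [ht.1]
  have heq : Set.EqOn (fun t => (1 + |t - r|) ^ (-4:ℤ))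
      (fun t => (1 + t - r) ^ (-4:ℤ)) (Set.uIcc (-lam) lam) := by
    intro t ht
    have ht1 : -lam ≤ t := by rw [huIcc, Set.mem_Icc] at ht; exact ht.1
    have : |t - r| = t - r := abs_of_nonneg (by linarith)
    simp only [this]
    norm_num
    ring_nf
  have hderiv : ∀ t ∈ Set.uIcc (-lam) lam,
      HasDerivAt (fun t => (-(1/3) : ℝ) * (1 + t - r) ^ (-3:ℤ)) ((1 + t - r) ^ (-4:ℤ)) t := by
    intro t ht
    have hne : (1 + t - r) ≠ 0 := ne_of_gt (h0 t ht)
    have h1 : HasDerivAt (fun t : ℝ => 1 + t - r) 1 t := by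
      simpa using ((hasDerivAt_id t).const_add 1).sub_const r
    have h2 := ((hasDerivAt_zpow (-3) (1 + t - r) (Or.inl hne)).comp t h1).const_mul (-(1/3) : ℝ)
    refine h2.congr_deriv ?_
    have : (-3 : ℤ) - 1 = -4 := by norm_num
    rw [this]
    push_cast
    ring
  have hint : IntervalIntegrable (fun t => (1 + t - r) ^ (-4:ℤ)) volume (-lam) lam := by
    apply ContinuousOn.intervalIntegrable
    exact ContinuousOn.zpow₀
      (((continuous_const.add continuous_id).sub continuous_const).continuousOn) (-4)
      (fun t ht => Or.inl (ne_of_gt (h0 t ht)))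
  rw [intervalIntegral.integral_congr heq,
    intervalIntegral.integral_eq_sub_of_hasDerivAt hderiv hint]
  have hpos : (0:ℝ) < (1 + lam - r) ^ (-3:ℤ) := by
    have : (0:ℝ) < 1 + lam - r := by linarith
    positivity
  have e : (1 + -lam - r) = 1 + (-r - lam) := by ring
  rw [e]
  linarith

private lemma core (lam r : ℝ) (hlam : 0 < lam) (hr : lam < |r|) :
    ∫ t in (-lam)..lam, (1 + |t - r|) ^ (-4:ℤ) ≤ (1/3) * (1 + (|r| - lam)) ^ (-3:ℤ) := by
  rcases le_or_gt 0 r with hs | hs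
  · rw [abs_of_nonneg hs] at *
    exact core_pos lam r hlam hr
  · rw [abs_of_neg hs] at *
    exact core_neg lam r hlam (by linarith)

private lemma per_term (h : ℝ → ℂ) (hmeas : Measurable h) (C₁ : ℝ)
    (hdecay : ∀ t : ℝ, ‖h t‖ ≤ C₁ * (1 + |t|) ^ (-4 : ℤ)) (hC₁ : 0 ≤ C₁)
    (lam R : ℝ) (hlam : 1 ≤ lam) (hr : lam < |R|) :
    ‖∫ t in (-lam)..lam, h (t - R)‖ ≤ ((C₁+1)/3) * (1 + (|R| - lam)) ^ (-3:ℤ) := by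
  have hll : -lam ≤ lam := by linarith
  have hint2 : IntervalIntegrable (fun t => (C₁+1) * (1 + |t - R|) ^ (-4:ℤ)) volume (-lam) lam := by
    apply Continuous.intervalIntegrable
    apply Continuous.mul continuous_const
    apply Continuous.zpow₀ (continuous_const.add ((continuous_id.sub continuous_const).abs)) (-4)
    intro t
    exact Or.inl (by show (1:ℝ) + |t - R| ≠ 0; positivity)
  have hint0 : IntervalIntegrable (fun t => (1 + |t - R|) ^ (-4:ℤ)) volume (-lam) lam := by
    apply Continuous.intervalIntegrable
    apply Continuous.zpow₀ (continuous_const.add ((continuous_id.sub continuous_const).abs)) (-4)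
    intro t
    exact Or.inl (by show (1:ℝ) + |t - R| ≠ 0; positivity)
  have hint1 : IntervalIntegrable (fun t => ‖h (t - R)‖) volume (-lam) lam := by
    apply IntervalIntegrable.mono_fun' (g := fun _ => C₁ + 1) (intervalIntegrable_const)
    · exact ((hmeas.comp (measurable_id.sub_const R)).norm).aestronglyMeasurable
    · apply Filter.Eventually.of_forall
      intro x
      have h1 := hdecay (x - R)
      have h2 : (1 + |x - R|) ^ (-4:ℤ) ≤ 1 := zpow_neg4_le_one (abs_nonneg _)
      have h3 : C₁ * (1 + |x - R|) ^ (-4:ℤ) ≤ C₁ := by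
        nlinarith
      simp only [norm_norm]
      linarith
  have step1 : ‖∫ t in (-lam)..lam, h (t - R)‖ ≤ ∫ t in (-lam)..lam, ‖h (t - R)‖ :=
    intervalIntegral.norm_integral_le_integral_norm hll
  have step2 : (∫ t in (-lam)..lam, ‖h (t - R)‖)
      ≤ ∫ t in (-lam)..lam, (C₁+1) * (1 + |t - R|) ^ (-4:ℤ) := by
    apply intervalIntegral.integral_mono_on hll hint1 hint2
    intro x _
    have h1 := hdecay (x - R)
    have h2 : (0:ℝ) < (1 + |x - R|) ^ (-4:ℤ) := by positivity
    nlinarith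
  have step3 : (∫ t in (-lam)..lam, (C₁+1) * (1 + |t - R|) ^ (-4:ℤ))
      = (C₁+1) * ∫ t in (-lam)..lam, (1 + |t - R|) ^ (-4:ℤ) :=
    intervalIntegral.integral_const_mul _ _
  have step4 := core lam R (by linarith) hr
  calc ‖∫ t in (-lam)..lam, h (t - R)‖
      ≤ ∫ t in (-lam)..lam, (C₁+1) * (1 + |t - R|) ^ (-4:ℤ) := le_trans step1 step2
    _ = (C₁+1) * ∫ t in (-lam)..lam, (1 + |t - R|) ^ (-4:ℤ) := step3
    _ ≤ (C₁+1) * ((1/3) * (1 + (|R| - lam)) ^ (-3:ℤ)) :=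
        mul_le_mul_of_nonneg_left step4 (by linarith)
    _ = ((C₁+1)/3) * (1 + (|R| - lam)) ^ (-3:ℤ) := by ring

/-- If a sequence `(r_j)` satisfies the local counting bound and `h` has
quartic decay, then `Σ_{|r_j| > λ} |∫_{-λ}^{λ} h(t - r_j) dt| ≤ C λ`. -/
theorem tail_integral_sum_bound_high (r : ℤ → ℝ) (C₀ : ℝ) (hC₀ : 0 < C₀)
    (hcount : ∀ μ : ℝ, {j : ℤ | |r j - μ| ≤ 1}.Finite ∧
      (Nat.card {j : ℤ | |r j - μ| ≤ 1} : ℝ) ≤ C₀ * (1 + |μ|))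
    (h : ℝ → ℂ) (hmeas : Measurable h) (C₁ : ℝ)
    (hdecay : ∀ t : ℝ, ‖h t‖ ≤ C₁ * (1 + |t|) ^ (-4 : ℤ)) :
    ∃ C : ℝ, 0 < C ∧ ∀ lam : ℝ, 1 ≤ lam →
      Summable (fun j : {j : ℤ // lam < |r j|} =>
        ‖∫ t in (-lam)..lam, h (t - r j)‖) ∧
      (∑' j : {j : ℤ // lam < |r j|},
        ‖∫ t in (-lam)..lam, h (t - r j)‖) ≤ C * lam := by
  classical
  have hC₁ : 0 ≤ C₁ := by
    have h0 := hdecay 0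
    simp only [abs_zero, add_zero, one_zpow, mul_one] at h0
    exact le_trans (norm_nonneg _) h0
  refine ⟨3 * C₀ * (C₁ + 1), by positivity, ?_⟩
  intro lam hlam
  set f : {j : ℤ // lam < |r j|} → ℝ :=
    fun j => ‖∫ t in (-lam)..lam, h (t - r j)‖ with hfdef
  have hnn : 0 ≤ f := fun j => norm_nonneg _
  have key : ∀ u : Finset {j : ℤ // lam < |r j|}, ∑ j ∈ u, f j ≤ 3 * C₀ * (C₁ + 1) * lam := by
    intro u
    set k : {j : ℤ // lam < |r j|} → ℕ := fun j => ⌊|r (j:ℤ)| - lam⌋₊ with hkdef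
    -- fiber cardinality bound
    have cardbound : ∀ b : ℕ,
        ((u.filter (fun j => k j = b)).card : ℝ) ≤ 4 * C₀ * lam * (1 + (b:ℝ)) := by
      intro b
      obtain ⟨hAfin, hAcard⟩ := hcount (lam + b)
      obtain ⟨hBfin, hBcard⟩ := hcount (-(lam + b))
      have hsub : ∀ j ∈ u.filter (fun j => k j = b),
          (j:ℤ) ∈ hAfin.toFinset ∪ hBfin.toFinset := by
        intro j hj
        rw [Finset.mem_filter] at hj
        have hj2 : ⌊|r (j:ℤ)| - lam⌋₊ = b := hj.2
        have hjr : lam < |r (j:ℤ)| := j.2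
        have hge1 : (b:ℝ) ≤ |r (j:ℤ)| - lam := by
          rw [← hj2]; exact Nat.floor_le (by linarith)
        have hge2 : |r (j:ℤ)| - lam < (b:ℝ) + 1 := by
          rw [← hj2]; exact Nat.lt_floor_add_one _
        rw [Finset.mem_union, Set.Finite.mem_toFinset, Set.Finite.mem_toFinset,
          Set.mem_setOf_eq, Set.mem_setOf_eq]
        rcases le_or_gt 0 (r (j:ℤ)) with hs | hs
        · left
          rw [abs_of_nonneg hs] at hge1 hge2
          rw [abs_le]
          constructor <;> linarith
        · right
          rw [abs_of_neg hs] at hge1 hge2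
          rw [abs_le]
          constructor <;> linarith
      have hcard : (u.filter (fun j => k j = b)).card
          ≤ (hAfin.toFinset ∪ hBfin.toFinset).card :=
        Finset.card_le_card_of_injOn (fun j => (j:ℤ)) hsub
          (fun a _ c _ hac => Subtype.ext hac)
      have hunion := Finset.card_union_le hAfin.toFinset hBfin.toFinset
      have eA : (hAfin.toFinset.card : ℝ) ≤ C₀ * (1 + (lam + b)) := by
        have : (hAfin.toFinset.card : ℕ) = Nat.card {j : ℤ | |r j - (lam + b)| ≤ 1} := by
          rw [Nat.card_coe_set_eq, Set.ncard_eq_toFinset_card _ hAfin]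
        rw [show ((hAfin.toFinset.card : ℕ):ℝ) = (Nat.card {j : ℤ | |r j - (lam + b)| ≤ 1} : ℝ)
          from by rw [this]]
        refine le_trans hAcard ?_
        rw [abs_of_nonneg (by positivity : (0:ℝ) ≤ lam + b)]
      have eB : (hBfin.toFinset.card : ℝ) ≤ C₀ * (1 + (lam + b)) := by
        have : (hBfin.toFinset.card : ℕ) = Nat.card {j : ℤ | |r j - (-(lam + b))| ≤ 1} := by
          rw [Nat.card_coe_set_eq, Set.ncard_eq_toFinset_card _ hBfin]
        rw [show ((hBfin.toFinset.card : ℕ):ℝ) = (Nat.card {j : ℤ | |r j - (-(lam+b))| ≤ 1} : ℝ)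
          from by rw [this]]
        refine le_trans hBcard ?_
        rw [abs_neg, abs_of_nonneg (by positivity : (0:ℝ) ≤ lam + b)]
      have h2C : ((u.filter (fun j => k j = b)).card : ℝ)
          ≤ 2 * C₀ * (1 + (lam + b)) := by
        have h1 : ((u.filter (fun j => k j = b)).card : ℝ)
            ≤ ((hAfin.toFinset ∪ hBfin.toFinset).card : ℝ) := by exact_mod_cast hcard
        have h2 : ((hAfin.toFinset ∪ hBfin.toFinset).card : ℝ)
            ≤ (hAfin.toFinset.card : ℝ) + (hBfin.toFinset.card : ℝ) := by exact_mod_cast hunion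
        linarith
      have hfinal : 2 * C₀ * (1 + (lam + b)) ≤ 4 * C₀ * lam * (1 + (b:ℝ)) := by
        have hb : (0:ℝ) ≤ (b:ℝ) := Nat.cast_nonneg _
        nlinarith [mul_nonneg hC₀.le (sub_nonneg.mpr hlam),
          mul_nonneg (mul_nonneg hC₀.le hb) (by linarith : (0:ℝ) ≤ 2 * lam - 1)]
      linarith
    have hterm : ∀ j ∈ u, f j ≤ ((C₁+1)/3) * (1 + (k j : ℝ)) ^ (-3:ℤ) := by
      intro j _
      refine le_trans (per_term h hmeas C₁ hdecay hC₁ lam (r (j:ℤ)) hlam j.2) ?_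
      have h1 : (k j : ℝ) ≤ |r (j:ℤ)| - lam := Nat.floor_le (by linarith [j.2])
      exact mul_le_mul_of_nonneg_left (zpow_neg3_anti (by positivity) (by linarith))
        (by positivity)
    have habs : ∀ b : ℕ, (0:ℝ) ≤ ((C₁+1)/3) * (1 + (b:ℝ)) ^ (-3:ℤ) := by
      intro b
      have : (0:ℝ) < 1 + (b:ℝ) := by positivity
      positivity
    calc ∑ j ∈ u, f j
        ≤ ∑ j ∈ u, ((C₁+1)/3) * (1 + (k j : ℝ)) ^ (-3:ℤ) := Finset.sum_le_sum hterm
      _ = ∑ b ∈ u.image k, ∑ j ∈ u.filter (fun j => k j = b),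
            ((C₁+1)/3) * (1 + (b:ℝ)) ^ (-3:ℤ) :=
          (Finset.sum_fiberwise_of_maps_to' (g := k)
            (f := fun b : ℕ => ((C₁+1)/3) * (1 + (b:ℝ)) ^ (-3:ℤ))
            (fun j hj => Finset.mem_image_of_mem k hj)).symm
      _ ≤ ∑ b ∈ u.image k, (4 * C₀ * lam * (1 + (b:ℝ)))
            * (((C₁+1)/3) * (1 + (b:ℝ)) ^ (-3:ℤ)) := by
          apply Finset.sum_le_sum
          intro b _
          rw [Finset.sum_const, nsmul_eq_mul]
          exact mul_le_mul_of_nonneg_right (cardbound b) (habs b)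
      _ = (4 * C₀ * (C₁+1) / 3 * lam) * ∑ b ∈ u.image k, ((1 + (b:ℝ))^2)⁻¹ := by
          rw [Finset.mul_sum]
          apply Finset.sum_congr rfl
          intro b _
          have hb : (0:ℝ) < 1 + (b:ℝ) := by positivity
          rw [zpow_neg, zpow_ofNat]
          field_simp
      _ ≤ (4 * C₀ * (C₁+1) / 3 * lam) * 2 :=
          mul_le_mul_of_nonneg_left (sum_finset_inv_sq _) (by positivity)
      _ ≤ 3 * C₀ * (C₁ + 1) * lam := by
          nlinarith [mul_nonneg (mul_nonneg hC₀.le (by linarith : (0:ℝ) ≤ C₁ + 1))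
            (by linarith : (0:ℝ) ≤ lam)]
  exact ⟨summable_of_sum_le hnn key, (summable_of_sum_le hnn key).tsum_le_of_sum_le key⟩
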